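/- If a normalized block sequence (x_n) in (c₀₀, ‖·‖_{JT_{2,p}}) is equivalent to the unit vector basis of ℓ_p, then lim_n ‖x_n|_σ‖ = 0 for every branch σ of 𝒯. -/

import Mathlib

open Set Filter Topology

/-- `k` is an immediate successor of `n` in the order `le`. -/
def ImmSucc (le : ℕ → ℕ → Prop) (n k : ℕ) : Prop :=
  le n k ∧ n ≠ k ∧ ∀ m, le n m → le m k → m = n ∨ m = k

/-- The tree `𝒯`: a partial order on `ℕ` compatible with the usual order, in which the set of
strict predecessors of every element is finite and linearly ordered, and every element has
infinitely many immediate successors. -/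
structure IsJTTree (le : ℕ → ℕ → Prop) : Prop where
  refl : ∀ n, le n n
  antisymm : ∀ {m n}, le m n → le n m → m = n
  trans : ∀ {a b c}, le a b → le b c → le a c
  compat : ∀ {m n}, le m n → m ≤ n
  pred_finite : ∀ n, {m | le m n ∧ m ≠ n}.Finite
  pred_linear : ∀ n a b, le a n → le b n → le a b ∨ le b a
  succ_infinite : ∀ n, {k | ImmSucc le n k}.Infinite

/-- A segment of the tree: a nonempty set of the form `{k : m ⪯ k ∧ k ⪯ n}`. -/
def IsSegment (le : ℕ → ℕ → Prop) (s : Set ℕ) : Prop :=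
  ∃ m n, le m n ∧ s = {k | le m k ∧ le k n}

/-- A branch: a maximal linearly ordered subset of `ℕ`. -/
def IsBranch (le : ℕ → ℕ → Prop) (σ : Set ℕ) : Prop :=
  IsChain le σ ∧ ∀ τ, IsChain le τ → σ ⊆ τ → σ = τ

/-- `‖x‖_s = (∑_{i ∈ s} x(i)²)^(1/2)`. -/
noncomputable def segNorm (x : ℕ → ℝ) (s : Set ℕ) : ℝ :=
  Real.sqrt (∑' i, s.indicator (fun j => (x j) ^ 2) i)

/-- The `JT_{2,p}` norm on finitely supported sequences:
`‖x‖ = sup {(∑_k ‖x‖_{s_k}^p)^(1/p) : s₁,…,s_n pairwise disjoint segments}`. -/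
noncomputable def jtNorm (le : ℕ → ℕ → Prop) (p : ℝ) (x : ℕ → ℝ) : ℝ :=
  sSup { r : ℝ | ∃ (n : ℕ) (s : Fin n → Set ℕ),
    (∀ k, IsSegment le (s k)) ∧
    (∀ k l, k ≠ l → Disjoint (s k) (s l)) ∧
    r = (∑ k : Fin n, segNorm x (s k) ^ p) ^ (1 / p) }

/-- A block sequence of finitely supported vectors. -/
def IsBlockSeq (x : ℕ → ℕ → ℝ) : Prop :=
  (∀ n, (Function.support (x n)).Finite) ∧
  ∀ n i j, x n i ≠ 0 → x (n + 1) j ≠ 0 → i < j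

/-- The final segment `σ_{>l} = {k ∈ σ : k > l}`. -/
def finalSeg (σ : Set ℕ) (l : ℕ) : Set ℕ := {k ∈ σ | l < k}

/-- Two final segments are incomparable when their least elements are `le`-incomparable. -/
def IncompFinal (le : ℕ → ℕ → Prop) (A B : Set ℕ) : Prop :=
  A.Nonempty ∧ B.Nonempty ∧ ¬ le (sInf A) (sInf B) ∧ ¬ le (sInf B) (sInf A)


lemma rpow_add_rpow_le' {a b r : ℝ} (ha : 0 ≤ a) (hb : 0 ≤ b) (hr : 1 ≤ r) :
    a ^ r + b ^ r ≤ (a + b) ^ r := by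
  have h0 : (0:ℝ) ≤ r - 1 := by linarith
  have key : ∀ u v : ℝ, 0 ≤ u → 0 ≤ v → u ^ r ≤ (u + v) ^ (r - 1) * u := by
    intro u v hu hv
    rcases eq_or_lt_of_le hu with h | h
    · rw [← h, Real.zero_rpow (by linarith : r ≠ 0), mul_zero]
    · have h1 : u ^ r = u ^ (r - 1) * u := by
        have := Real.rpow_add h (r - 1) 1
        rw [Real.rpow_one] at this
        rw [← this]; ring_nf
      rw [h1]
      exact mul_le_mul_of_nonneg_right (Real.rpow_le_rpow hu (by linarith) h0) hu
  calc a ^ r + b ^ r ≤ (a + b) ^ (r - 1) * a + (b + a) ^ (r - 1) * b :=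
        add_le_add (key a b ha hb) (key b a hb ha)
    _ = (a + b) ^ (r - 1) * (a + b) := by rw [add_comm b a]; ring
    _ = (a + b) ^ r := by
        rcases eq_or_lt_of_le (add_nonneg ha hb) with h | h
        · rw [← h, mul_zero, Real.zero_rpow (by linarith : r ≠ 0)]
        · have := Real.rpow_add h (r - 1) 1
          rw [Real.rpow_one] at this
          rw [← this]; ring_nf

lemma sum_rpow_le_rpow_sum {ι : Type*} (s : Finset ι) (f : ι → ℝ) (hf : ∀ i, 0 ≤ f i)
    {r : ℝ} (hr : 1 ≤ r) : ∑ i ∈ s, f i ^ r ≤ (∑ i ∈ s, f i) ^ r := by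
  classical
  induction s using Finset.induction with
  | empty => simp; positivity
  | insert a t hnot ih =>
    rw [Finset.sum_insert hnot, Finset.sum_insert hnot]
    calc f a ^ r + ∑ i ∈ t, f i ^ r ≤ f a ^ r + (∑ i ∈ t, f i) ^ r := by linarith
      _ ≤ (f a + ∑ i ∈ t, f i) ^ r :=
          rpow_add_rpow_le' (hf a) (Finset.sum_nonneg fun i _ => hf i) hr

lemma tsum_indicator_eq (x : ℕ → ℝ) (G : Finset ℕ) (hG : ∀ i ∉ G, x i = 0) (s : Set ℕ) :
    ∑' i, s.indicator (fun j => (x j) ^ 2) i = ∑ i ∈ G, s.indicator (fun j => (x j) ^ 2) i := by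
  refine tsum_eq_sum ?_
  intro i hi
  by_cases h : i ∈ s <;> simp [Set.indicator_apply, h, hG i hi]

lemma segNorm_nonneg (x : ℕ → ℝ) (s : Set ℕ) : 0 ≤ segNorm x s := Real.sqrt_nonneg _

lemma segNorm_eq_finsum (x : ℕ → ℝ) (G : Finset ℕ) (hG : ∀ i ∉ G, x i = 0) (s : Set ℕ) :
    segNorm x s = Real.sqrt (∑ i ∈ G, s.indicator (fun j => (x j) ^ 2) i) := by
  rw [segNorm, tsum_indicator_eq x G hG]

lemma segNorm_sq_eq (x : ℕ → ℝ) (G : Finset ℕ) (hG : ∀ i ∉ G, x i = 0) (s : Set ℕ) :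
    segNorm x s ^ 2 = ∑ i ∈ G, s.indicator (fun j => (x j) ^ 2) i := by
  rw [segNorm_eq_finsum x G hG s, Real.sq_sqrt]
  exact Finset.sum_nonneg fun i _ => Set.indicator_nonneg (fun j _ => sq_nonneg _) i

/-- Every candidate value in the `jtNorm` sup-set is bounded by the ℓ₂ norm. -/
lemma jt_set_bound (le : ℕ → ℕ → Prop) {p : ℝ} (hp : 2 ≤ p) (x : ℕ → ℝ)
    (G : Finset ℕ) (hG : ∀ i ∉ G, x i = 0) {r : ℝ}
    (hr : r ∈ { r : ℝ | ∃ (n : ℕ) (s : Fin n → Set ℕ),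
      (∀ k, IsSegment le (s k)) ∧
      (∀ k l, k ≠ l → Disjoint (s k) (s l)) ∧
      r = (∑ k : Fin n, segNorm x (s k) ^ p) ^ (1 / p) }) :
    r ≤ Real.sqrt (∑ i ∈ G, (x i) ^ 2) := by
  obtain ⟨n, s, _, hdisj, rfl⟩ := hr
  set S : ℝ := ∑ i ∈ G, (x i) ^ 2 with hS
  have hS0 : 0 ≤ S := Finset.sum_nonneg fun i _ => sq_nonneg _
  have hp0 : (0:ℝ) < p := by linarith
  -- step 1 : sum of squares bounded by S
  have hsq : ∑ k : Fin n, segNorm x (s k) ^ (2:ℕ) ≤ S := by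
    have : ∀ k, segNorm x (s k) ^ (2:ℕ) = ∑ i ∈ G, (s k).indicator (fun j => (x j) ^ 2) i :=
      fun k => segNorm_sq_eq x G hG (s k)
    rw [Finset.sum_congr rfl fun k _ => this k, Finset.sum_comm]
    refine Finset.sum_le_sum fun i _ => ?_
    by_cases h : ∃ k, i ∈ s k
    · obtain ⟨k₀, hk₀⟩ := h
      rw [Finset.sum_eq_single k₀]
      · simp [Set.indicator_apply, hk₀]
      · intro k _ hk
        have : i ∉ s k := fun hik =>
          (hdisj k k₀ hk).le_bot ⟨hik, hk₀⟩
        simp [Set.indicator_apply, this]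
      · intro h; exact absurd (Finset.mem_univ k₀) h
    · push_neg at h
      rw [Finset.sum_eq_zero fun k _ => by simp [Set.indicator_apply, h k]]
      exact sq_nonneg _
  -- step 2 : p-sum bounded by S^(p/2)
  have hpsum : ∑ k : Fin n, segNorm x (s k) ^ p ≤ S ^ (p / 2) := by
    have hrw : ∀ k : Fin n, segNorm x (s k) ^ p = (segNorm x (s k) ^ (2:ℕ)) ^ (p / 2) := by
      intro k
      rw [← Real.rpow_natCast (segNorm x (s k)) 2, ← Real.rpow_mul (segNorm_nonneg x (s k))]
      norm_num
      ring_nf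
    rw [Finset.sum_congr rfl fun k _ => hrw k]
    calc ∑ k : Fin n, (segNorm x (s k) ^ (2:ℕ)) ^ (p / 2)
        ≤ (∑ k : Fin n, segNorm x (s k) ^ (2:ℕ)) ^ (p / 2) :=
          sum_rpow_le_rpow_sum _ _ (fun k => sq_nonneg _) (by linarith)
      _ ≤ S ^ (p / 2) := Real.rpow_le_rpow
          (Finset.sum_nonneg fun k _ => sq_nonneg _) hsq (by linarith)
  -- step 3
  calc (∑ k : Fin n, segNorm x (s k) ^ p) ^ (1 / p)
      ≤ (S ^ (p / 2)) ^ (1 / p) := Real.rpow_le_rpow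
        (Finset.sum_nonneg fun k _ => Real.rpow_nonneg (segNorm_nonneg x _) p) hpsum
        (by positivity)
    _ = S ^ (1 / 2 : ℝ) := by
        rw [← Real.rpow_mul hS0]
        congr 1
        field_simp
    _ = Real.sqrt S := (Real.sqrt_eq_rpow S).symm

lemma zero_mem_jt_set (le : ℕ → ℕ → Prop) {p : ℝ} (hp : p ≠ 0) (x : ℕ → ℝ) :
    (0:ℝ) ∈ { r : ℝ | ∃ (n : ℕ) (s : Fin n → Set ℕ),
      (∀ k, IsSegment le (s k)) ∧
      (∀ k l, k ≠ l → Disjoint (s k) (s l)) ∧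
      r = (∑ k : Fin n, segNorm x (s k) ^ p) ^ (1 / p) } := by
  refine ⟨0, fun k => k.elim0, fun k => k.elim0, fun k => k.elim0, ?_⟩
  rw [Finset.univ_eq_empty, Finset.sum_empty, Real.zero_rpow (one_div_ne_zero hp)]

lemma jtNorm_le_sqrt (le : ℕ → ℕ → Prop) {p : ℝ} (hp : 2 ≤ p) (x : ℕ → ℝ)
    (G : Finset ℕ) (hG : ∀ i ∉ G, x i = 0) :
    jtNorm le p x ≤ Real.sqrt (∑ i ∈ G, (x i) ^ 2) := by
  refine csSup_le ⟨0, zero_mem_jt_set le (by positivity) x⟩ fun r hr => jt_set_bound le hp x G hG hr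

lemma le_jtNorm (le : ℕ → ℕ → Prop) {p : ℝ} (hp : 2 ≤ p) (x : ℕ → ℝ)
    (G : Finset ℕ) (hG : ∀ i ∉ G, x i = 0) {r : ℝ}
    (hr : r ∈ { r : ℝ | ∃ (n : ℕ) (s : Fin n → Set ℕ),
      (∀ k, IsSegment le (s k)) ∧
      (∀ k l, k ≠ l → Disjoint (s k) (s l)) ∧
      r = (∑ k : Fin n, segNorm x (s k) ^ p) ^ (1 / p) }) :
    r ≤ jtNorm le p x :=
  le_csSup ⟨Real.sqrt (∑ i ∈ G, (x i) ^ 2), fun r hr => jt_set_bound le hp x G hG hr⟩ hr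

lemma jtNorm_nonneg (le : ℕ → ℕ → Prop) {p : ℝ} (hp : 2 ≤ p) (x : ℕ → ℝ)
    (G : Finset ℕ) (hG : ∀ i ∉ G, x i = 0) : 0 ≤ jtNorm le p x :=
  le_jtNorm le hp x G hG (zero_mem_jt_set le (by positivity) x)

lemma jtNorm_zero (le : ℕ → ℕ → Prop) {p : ℝ} (hp : 2 ≤ p) {x : ℕ → ℝ}
    (hx : ∀ i, x i = 0) : jtNorm le p x = 0 := by
  have h := jtNorm_le_sqrt le hp x ∅ (fun i _ => hx i)
  simp at h
  exact le_antisymm h (jtNorm_nonneg le hp x ∅ (fun i _ => hx i))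

lemma branch_total {le : ℕ → ℕ → Prop} (hT : IsJTTree le) {σ : Set ℕ} (hσ : IsBranch le σ)
    {a b : ℕ} (ha : a ∈ σ) (hb : b ∈ σ) : le a b ∨ le b a := by
  rcases eq_or_ne a b with rfl | hne
  · exact Or.inl (hT.refl a)
  · exact hσ.1 ha hb hne

lemma branch_le {le : ℕ → ℕ → Prop} (hT : IsJTTree le) {σ : Set ℕ} (hσ : IsBranch le σ)
    {a b : ℕ} (ha : a ∈ σ) (hb : b ∈ σ) (hab : a ≤ b) : le a b := by
  rcases branch_total hT hσ ha hb with h | h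
  · exact h
  · have := hT.compat h
    have : a = b := le_antisymm hab this
    subst this; exact hT.refl a

lemma branch_between {le : ℕ → ℕ → Prop} (hT : IsJTTree le) {σ : Set ℕ} (hσ : IsBranch le σ)
    {a b k : ℕ} (ha : a ∈ σ) (hb : b ∈ σ) (h1 : le a k) (h2 : le k b) : k ∈ σ := by
  have hcomp : ∀ c ∈ σ, le c k ∨ le k c := by
    intro c hc
    rcases branch_total hT hσ hc hb with hcb | hbc
    · exact hT.pred_linear b c k hcb h2
    · exact Or.inr (hT.trans h2 hbc)
  have hchain : IsChain le (insert k σ) := by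
    intro u hu v hv huv
    rcases hu with rfl | hu
    · rcases hv with rfl | hv
      · exact absurd rfl huv
      · exact (hcomp v hv).symm
    · rcases hv with rfl | hv
      · exact hcomp u hu
      · exact hσ.1 hu hv huv
  have := hσ.2 (insert k σ) hchain (Set.subset_insert k σ)
  rw [this]
  exact Set.mem_insert k σ

theorem stmt4 (le : ℕ → ℕ → Prop) (hT : IsJTTree le) (p : ℝ) (hp : 2 < p)
    (x : ℕ → ℕ → ℝ) (hblock : IsBlockSeq x)
    (hnorm : ∀ n, jtNorm le p (x n) = 1)
    (hequiv : ∃ c C : ℝ, 0 < c ∧ c ≤ C ∧ ∀ (m : ℕ) (a : Fin m → ℝ),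
      c * (∑ i : Fin m, |a i| ^ p) ^ (1 / p) ≤
        jtNorm le p (fun j => ∑ i : Fin m, a i * x i j) ∧
      jtNorm le p (fun j => ∑ i : Fin m, a i * x i j) ≤
        C * (∑ i : Fin m, |a i| ^ p) ^ (1 / p)) :
    ∀ σ, IsBranch le σ →
      Tendsto (fun n => jtNorm le p (σ.indicator (x n))) atTop (nhds 0) := by
  classical
  obtain ⟨c, C, hc, hcC, hbd⟩ := hequiv
  have hp2 : (2:ℝ) ≤ p := hp.le
  have hp0 : (0:ℝ) < p := by linarith
  have hC : 0 < C := lt_of_lt_of_le hc hcC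
  intro σ hσ
  set f : ℕ → ℝ := fun n => jtNorm le p (σ.indicator (x n)) with hfdef
  have hsupp := hblock.1
  set Gn : ℕ → Finset ℕ := fun n => (hsupp n).toFinset with hGndef
  have hGn : ∀ n, ∀ i ∉ Gn n, x n i = 0 := by
    intro n i hi
    rw [hGndef] at hi
    simp only [Set.Finite.mem_toFinset, Function.mem_support, not_not] at hi
    exact hi
  have hGind : ∀ n, ∀ i ∉ Gn n, σ.indicator (x n) i = 0 := by
    intro n i hi
    by_cases h : i ∈ σ <;> simp [Set.indicator_apply, h, hGn n i hi]
  have hne_supp : ∀ n, (Function.support (x n)).Nonempty := by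
    intro n
    by_contra h
    rw [Set.not_nonempty_iff_eq_empty, Function.support_eq_empty_iff] at h
    have h0 : jtNorm le p (x n) = 0 :=
      jtNorm_zero le hp2 (fun i => by rw [h]; rfl)
    rw [hnorm n] at h0
    norm_num at h0
  have horder : ∀ n m, n < m → ∀ i j, x n i ≠ 0 → x m j ≠ 0 → i < j := by
    intro n m hnm
    induction m with
    | zero => omega
    | succ m ih =>
      rcases Nat.lt_succ_iff_lt_or_eq.mp hnm with h | h
      · intro i j hi hj
        obtain ⟨k, hk⟩ := hne_supp m
        exact lt_trans (ih h i k hi hk) (hblock.2 m k j hk hj)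
      · subst h; exact hblock.2 n
  by_contra hcon
  rw [Metric.tendsto_atTop] at hcon
  push_neg at hcon
  obtain ⟨ε, hε, hfreq⟩ := hcon
  have hSinf : {n | ε ≤ f n}.Infinite := by
    intro hfin
    obtain ⟨B, hB⟩ := hfin.bddAbove
    obtain ⟨n, hn, hd⟩ := hfreq (B + 1)
    have h0 : 0 ≤ f n := jtNorm_nonneg le hp2 _ (Gn n) (hGind n)
    rw [Real.dist_eq, sub_zero, abs_of_nonneg h0] at hd
    have := hB (Set.mem_setOf.mpr hd)
    omega
  -- choose N
  have hα : (0:ℝ) < 1/2 - 1/p := by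
    have h2 : (1:ℝ)/p < 1/2 := by
      rw [div_lt_div_iff₀ hp0 (by norm_num : (0:ℝ) < 2)]
      linarith
    linarith
  obtain ⟨X, hX⟩ := ((tendsto_rpow_atTop hα).eventually_ge_atTop (C/ε + 1)).exists_forall_of_atTop
  set N : ℕ := max 1 ⌈X⌉₊ with hNdef
  have hN1 : 1 ≤ N := le_max_left _ _
  have hNpos : (0:ℝ) < (N:ℝ) := by exact_mod_cast hN1
  have hNX : X ≤ (N:ℝ) := le_trans (Nat.le_ceil X) (by exact_mod_cast le_max_right 1 ⌈X⌉₊)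
  have hNα : C/ε + 1 ≤ (N:ℝ) ^ (1/2 - 1/p : ℝ) := hX _ hNX
  have hnum : C * (N:ℝ) ^ (1/p : ℝ) < ε * Real.sqrt N := by
    have hNp : (0:ℝ) < (N:ℝ) ^ (1/p : ℝ) := Real.rpow_pos_of_pos hNpos _
    have h1 : ε * ((C/ε + 1) * (N:ℝ) ^ (1/p : ℝ)) ≤
        ε * ((N:ℝ) ^ (1/2 - 1/p : ℝ) * (N:ℝ) ^ (1/p : ℝ)) := by
      apply mul_le_mul_of_nonneg_left (mul_le_mul_of_nonneg_right hNα hNp.le) hε.le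
    have h2 : ε * ((C/ε + 1) * (N:ℝ) ^ (1/p : ℝ)) = (C + ε) * (N:ℝ) ^ (1/p : ℝ) := by
      field_simp
    have h3 : (N:ℝ) ^ (1/2 - 1/p : ℝ) * (N:ℝ) ^ (1/p : ℝ) = Real.sqrt N := by
      rw [← Real.rpow_add hNpos, Real.sqrt_eq_rpow]
      norm_num
    rw [h2, h3] at h1
    nlinarith
  -- choose F
  obtain ⟨tS, htS_sub, htS_fin, htS_card⟩ := hSinf.exists_subset_ncard_eq N
  set F : Finset ℕ := htS_fin.toFinset with hFdef
  have hFcard : F.card = N := by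
    rw [hFdef, ← Set.ncard_eq_toFinset_card tS htS_fin]
    exact htS_card
  have hFε : ∀ n ∈ F, ε ≤ f n := by
    intro n hn
    rw [hFdef, Set.Finite.mem_toFinset] at hn
    exact htS_sub hn
  have hFne : F.Nonempty := Finset.card_pos.mp (by rw [hFcard]; exact hN1)
  -- segments
  set A : ℕ → Set ℕ := fun n => σ ∩ Function.support (x n) with hAdef
  have hAfin : ∀ n, (A n).Finite := fun n => (hsupp n).subset Set.inter_subset_right
  have hAne : ∀ n ∈ F, (A n).Nonempty := by
    intro n hn
    by_contra h
    rw [Set.not_nonempty_iff_eq_empty] at h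
    have hz : ∀ i, σ.indicator (x n) i = 0 := by
      intro i
      by_cases hiσ : i ∈ σ
      · by_cases hxi : x n i = 0
        · simp [Set.indicator_apply, hiσ, hxi]
        · exact absurd (Set.eq_empty_iff_forall_notMem.mp h i ⟨hiσ, hxi⟩) (fun hh => hh)
      · simp [Set.indicator_apply, hiσ]
    have h0 : f n = 0 := jtNorm_zero le hp2 hz
    have := hFε n hn
    rw [h0] at this
    linarith
  set aa : ℕ → ℕ := fun n => sInf (A n) with haadef
  set bb : ℕ → ℕ := fun n => sSup (A n) with hbbdef
  have haA : ∀ n ∈ F, aa n ∈ A n := fun n hn => Nat.sInf_mem (hAne n hn)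
  have hbA : ∀ n ∈ F, bb n ∈ A n := fun n hn => Nat.sSup_mem (hAne n hn) (hAfin n).bddAbove
  have hale : ∀ n, ∀ k ∈ A n, aa n ≤ k ∧ k ≤ bb n :=
    fun n k hk => ⟨Nat.sInf_le hk, le_csSup (hAfin n).bddAbove hk⟩
  set T : ℕ → Set ℕ := fun n => {k | le (aa n) k ∧ le k (bb n)} with hTdef
  have haσ : ∀ n ∈ F, aa n ∈ σ := fun n hn => (haA n hn).1
  have hbσ : ∀ n ∈ F, bb n ∈ σ := fun n hn => (hbA n hn).1
  have hTσ : ∀ n ∈ F, T n ⊆ σ := fun n hn k hk =>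
    branch_between hT hσ (haσ n hn) (hbσ n hn) hk.1 hk.2
  have hAT : ∀ n ∈ F, A n ⊆ T n := by
    intro n hn k hk
    obtain ⟨h1, h2⟩ := hale n k hk
    exact ⟨branch_le hT hσ (haσ n hn) hk.1 h1, branch_le hT hσ hk.1 (hbσ n hn) h2⟩
  have hT_nat : ∀ n, ∀ k ∈ T n, aa n ≤ k ∧ k ≤ bb n :=
    fun n k hk => ⟨hT.compat hk.1, hT.compat hk.2⟩
  have hxm_zero : ∀ n ∈ F, ∀ m, m ≠ n → ∀ k ∈ T n, x m k = 0 := by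
    intro n hn m hm k hk
    by_contra hxmk
    rcases lt_or_gt_of_ne hm with h | h
    · have h1 := horder m n h k (aa n) hxmk (haA n hn).2
      have h2 := (hT_nat n k hk).1
      omega
    · have h1 := horder n m h (bb n) k (hbA n hn).2 hxmk
      have h2 := (hT_nat n k hk).2
      omega
  have hTdisj : ∀ n ∈ F, ∀ m ∈ F, n ≠ m → Disjoint (T n) (T m) := by
    have key : ∀ n ∈ F, ∀ m ∈ F, n < m → Disjoint (T n) (T m) := by
      intro n hn m hm hnm
      have hlt : bb n < aa m := horder n m hnm (bb n) (aa m) (hbA n hn).2 (haA m hm).2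
      rw [Set.disjoint_left]
      intro k hkn hkm
      have h1 := (hT_nat n k hkn).2
      have h2 := (hT_nat m k hkm).1
      omega
    intro n hn m hm hnm
    rcases lt_or_gt_of_ne hnm with h | h
    · exact key n hn m hm h
    · exact (key m hm n hn h).symm
  -- the big segment
  set n₀ : ℕ := F.min' hFne with hn₀def
  set n₁ : ℕ := F.max' hFne with hn₁def
  have hn₀F : n₀ ∈ F := F.min'_mem hFne
  have hn₁F : n₁ ∈ F := F.max'_mem hFne
  have key_ab : ∀ n ∈ F, ∀ m ∈ F, n ≤ m → aa n ≤ aa m ∧ bb n ≤ bb m := by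
    intro n hn m hm hnm
    rcases eq_or_lt_of_le hnm with rfl | h
    · exact ⟨le_refl _, le_refl _⟩
    · have hlt : bb n < aa m := horder n m h (bb n) (aa m) (hbA n hn).2 (haA m hm).2
      have h1 := (hale n (aa n) (haA n hn)).2
      have h2 := (hale m (aa m) (haA m hm)).2
      exact ⟨by omega, by omega⟩
  set Tb : Set ℕ := {k | le (aa n₀) k ∧ le k (bb n₁)} with hTbdef
  have hab01 : aa n₀ ≤ bb n₁ := by
    have h1 := key_ab n₀ hn₀F n₁ hn₁F (F.min'_le n₁ hn₁F)
    have h2 := (hale n₁ (aa n₁) (haA n₁ hn₁F)).2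
    omega
  have hTble : le (aa n₀) (bb n₁) := branch_le hT hσ (haσ n₀ hn₀F) (hbσ n₁ hn₁F) hab01
  have hTbseg : IsSegment le Tb := ⟨aa n₀, bb n₁, hTble, rfl⟩
  have hTsub : ∀ n ∈ F, T n ⊆ Tb := by
    intro n hn k hk
    have h₀ := key_ab n₀ hn₀F n hn (F.min'_le n hn)
    have h₁ := key_ab n hn n₁ hn₁F (F.le_max' n hn)
    exact ⟨hT.trans (branch_le hT hσ (haσ n₀ hn₀F) (haσ n hn) h₀.1) hk.1,
      hT.trans hk.2 (branch_le hT hσ (hbσ n hn) (hbσ n₁ hn₁F) h₁.2)⟩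
  -- the combined vector
  set M : ℕ := n₁ + 1 with hMdef
  set av : Fin M → ℝ := fun i => if (i:ℕ) ∈ F then 1 else 0 with havdef
  set y : ℕ → ℝ := fun j => ∑ i : Fin M, av i * x (i:ℕ) j with hydef
  have hFsub : F ⊆ Finset.range M := fun n hn =>
    Finset.mem_range.mpr (Nat.lt_succ_of_le (F.le_max' n hn))
  have hy : ∀ j, y j = ∑ n ∈ F, x n j := by
    intro j
    simp only [hydef, havdef]
    rw [Fin.sum_univ_eq_sum_range (fun i => (if i ∈ F then (1:ℝ) else 0) * x i j) M]
    rw [Finset.sum_congr rfl (fun i _ => by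
      by_cases h : i ∈ F <;> simp [h] :
      ∀ i ∈ Finset.range M, (if i ∈ F then (1:ℝ) else 0) * x i j
        = if i ∈ F then x i j else 0)]
    rw [Finset.sum_ite_mem (Finset.range M) F (fun i => x i j),
      Finset.inter_eq_right.mpr hFsub]
  set Gy : Finset ℕ := F.biUnion Gn with hGydef
  have hsuppy : ∀ i ∉ Gy, y i = 0 := by
    intro i hi
    rw [hy]
    refine Finset.sum_eq_zero fun n hn => ?_
    by_contra hxi
    exact hi (Finset.mem_biUnion.mpr ⟨n, hn, by
      rw [hGndef]; exact (hsupp n).mem_toFinset.mpr hxi⟩)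
  have hyT : ∀ n ∈ F, ∀ k ∈ T n, y k = x n k := by
    intro n hn k hk
    rw [hy]
    exact Finset.sum_eq_single n (fun m _ hm => hxm_zero n hn m hm k hk)
      (fun h => absurd hn h)
  -- segNorm of y on T n equals that of x n, and is ≥ ε
  have hsegTn : ∀ n ∈ F, segNorm y (T n) = segNorm (x n) (T n) := by
    intro n hn
    rw [segNorm, segNorm]
    congr 1
    apply tsum_congr
    intro i
    by_cases h : i ∈ T n
    · simp [Set.indicator_apply, h, hyT n hn i h]
    · simp [Set.indicator_apply, h]
  have hsegTn_ge : ∀ n ∈ F, ε ≤ segNorm (x n) (T n) := by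
    intro n hn
    have heq : segNorm (x n) (T n)
        = Real.sqrt (∑ i ∈ Gn n, (σ.indicator (x n) i) ^ 2) := by
      rw [segNorm_eq_finsum (x n) (Gn n) (hGn n) (T n)]
      congr 1
      refine Finset.sum_congr rfl fun i hi => ?_
      have hxi : x n i ≠ 0 := by
        rw [hGndef] at hi
        exact (hsupp n).mem_toFinset.mp hi
      by_cases h : i ∈ T n
      · have hiσ : i ∈ σ := hTσ n hn h
        simp [Set.indicator_apply, h, hiσ]
      · have hiσ : i ∉ σ := fun hiσ => h (hAT n hn ⟨hiσ, hxi⟩)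
        simp [Set.indicator_apply, h, hiσ]
    have hle2 : f n ≤ Real.sqrt (∑ i ∈ Gn n, (σ.indicator (x n) i) ^ 2) :=
      jtNorm_le_sqrt le hp2 (σ.indicator (x n)) (Gn n) (hGind n)
    rw [heq]
    exact le_trans (hFε n hn) hle2
  -- lower bound on segNorm y Tb
  have hsum_ge : (N:ℝ) * ε^2 ≤ ∑ i ∈ Gy, Tb.indicator (fun j => y j ^ 2) i := by
    have hpt : ∀ i, ∑ n ∈ F, (T n).indicator (fun j => y j ^ 2) i
        ≤ Tb.indicator (fun j => y j ^ 2) i := by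
      intro i
      by_cases h : ∃ n ∈ F, i ∈ T n
      · obtain ⟨n₂, hn₂, hiT⟩ := h
        rw [Finset.sum_eq_single_of_mem n₂ hn₂ (fun m hm hmn => by
          have : i ∉ T m := Set.disjoint_left.mp (hTdisj n₂ hn₂ m hm (Ne.symm hmn)) hiT
          simp [Set.indicator_apply, this])]
        have hiTb : i ∈ Tb := hTsub n₂ hn₂ hiT
        simp [Set.indicator_apply, hiT, hiTb]
      · push_neg at h
        rw [Finset.sum_eq_zero (fun n hn => by simp [Set.indicator_apply, h n hn])]
        exact Set.indicator_nonneg (fun j _ => sq_nonneg _) i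
    calc (N:ℝ) * ε^2 = ∑ _n ∈ F, ε^2 := by
          rw [Finset.sum_const, hFcard, nsmul_eq_mul]
      _ ≤ ∑ n ∈ F, segNorm y (T n) ^ 2 := by
          refine Finset.sum_le_sum fun n hn => ?_
          have h1 : ε ≤ segNorm y (T n) := by
            rw [hsegTn n hn]; exact hsegTn_ge n hn
          exact pow_le_pow_left₀ hε.le h1 2
      _ = ∑ n ∈ F, ∑ i ∈ Gy, (T n).indicator (fun j => y j ^ 2) i :=
          Finset.sum_congr rfl fun n _ => segNorm_sq_eq y Gy hsuppy (T n)
      _ = ∑ i ∈ Gy, ∑ n ∈ F, (T n).indicator (fun j => y j ^ 2) i := Finset.sum_comm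
      _ ≤ ∑ i ∈ Gy, Tb.indicator (fun j => y j ^ 2) i :=
          Finset.sum_le_sum fun i _ => hpt i
  have hsegTb : ε * Real.sqrt N ≤ segNorm y Tb := by
    rw [segNorm_eq_finsum y Gy hsuppy Tb]
    have h1 : Real.sqrt ((N:ℝ) * ε^2) ≤
        Real.sqrt (∑ i ∈ Gy, Tb.indicator (fun j => y j ^ 2) i) :=
      Real.sqrt_le_sqrt hsum_ge
    have h2 : Real.sqrt ((N:ℝ) * ε^2) = Real.sqrt N * ε := by
      rw [Real.sqrt_mul (by positivity), Real.sqrt_sq hε.le]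
    rw [h2] at h1
    linarith [h1]
  -- jtNorm y is at least segNorm y Tb
  have hmem : segNorm y Tb ∈ { r : ℝ | ∃ (n : ℕ) (s : Fin n → Set ℕ),
      (∀ k, IsSegment le (s k)) ∧
      (∀ k l, k ≠ l → Disjoint (s k) (s l)) ∧
      r = (∑ k : Fin n, segNorm y (s k) ^ p) ^ (1 / p) } := by
    refine ⟨1, fun _ => Tb, fun _ => hTbseg,
      fun k l hkl => absurd (Subsingleton.elim k l) hkl, ?_⟩
    have h1 : ∑ k : Fin 1, segNorm y Tb ^ p = segNorm y Tb ^ p := by simp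
    rw [h1, ← Real.rpow_mul (segNorm_nonneg y Tb), mul_one_div_cancel hp0.ne',
      Real.rpow_one]
  have hlow : segNorm y Tb ≤ jtNorm le p y := le_jtNorm le hp2 y Gy hsuppy hmem
  -- upper bound
  have hup := (hbd M av).2
  rw [← hydef] at hup
  have hsum_av : ∑ i : Fin M, |av i| ^ p = (N:ℝ) := by
    simp only [havdef]
    rw [Fin.sum_univ_eq_sum_range (fun i => |if i ∈ F then (1:ℝ) else 0| ^ p) M]
    rw [Finset.sum_congr rfl (fun i _ => by
      by_cases h : i ∈ F <;>
        simp [h, Real.one_rpow, Real.zero_rpow hp0.ne'] :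
      ∀ i ∈ Finset.range M, |if i ∈ F then (1:ℝ) else 0| ^ p
        = if i ∈ F then (1:ℝ) else 0)]
    rw [Finset.sum_ite_mem (Finset.range M) F (fun _ => (1:ℝ)),
      Finset.inter_eq_right.mpr hFsub, Finset.sum_const, hFcard, nsmul_eq_mul, mul_one]
  rw [hsum_av] at hup
  have hfinal : ε * Real.sqrt N ≤ C * (N:ℝ) ^ (1/p : ℝ) :=
    le_trans hsegTb (le_trans hlow hup)
  linarith
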